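/- If x ∈ ℝⁿ solves f_M(x) = q, then z = proj_{ℝ₊ⁿ}(−x) (componentwise, z_i = max(−x_i, 0)) solves the linear complementarity problem (M,q): setting w = Mz + q, one has w ≥ 0, z ≥ 0, and wᵀz = 0. -/
import Mathlib


open Matrix

/-- Complementary matrix `C_M(α)`: j-th column is `-M_{·j}` if `j ∈ α`, else `e_j`. -/
def compMat {n : ℕ} (M : Matrix (Fin n) (Fin n) ℝ) (α : Finset (Fin n)) :
    Matrix (Fin n) (Fin n) ℝ :=
  fun i j => if j ∈ α then -M i j else (if i = j then 1 else 0)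

/-- The orthant `pos C_I(α)`: `x_j ≤ 0` for `j ∈ α`, `x_j ≥ 0` otherwise. -/
def orthant {n : ℕ} (α : Finset (Fin n)) : Set (Fin n → ℝ) :=
  {x | ∀ j, if j ∈ α then x j ≤ 0 else 0 ≤ x j}

/-- The cone generated by the columns of `A`. -/
def posCone {n : ℕ} (A : Matrix (Fin n) (Fin n) ℝ) : Set (Fin n → ℝ) :=
  {q | ∃ p : Fin n → ℝ, (∀ j, 0 ≤ p j) ∧ q = A.mulVec p}

/-- The piecewise linear map `f_M`, in closed form: on the orthant
`pos C_I(α)` this map equals `x ↦ C_{-M}(α) x`. -/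
def fpl {n : ℕ} (M : Matrix (Fin n) (Fin n) ℝ) (x : Fin n → ℝ) : Fin n → ℝ :=
  fun i => max (x i) 0 - M.mulVec (fun j => max (-x j) 0) i

/-- `z` solves the LCP `(M, q)`: with `w = Mz + q`, one has `z ≥ 0`, `w ≥ 0`, `wᵀz = 0`. -/
def isLCPsol {ι : Type*} [Fintype ι] (M : Matrix ι ι ℝ) (q z : ι → ℝ) : Prop :=
  (∀ i, 0 ≤ z i) ∧ (∀ i, 0 ≤ (M.mulVec z + q) i) ∧ (∀ i, (M.mulVec z + q) i * z i = 0)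

theorem stmt_1 {n : ℕ} (M : Matrix (Fin n) (Fin n) ℝ) (q x : Fin n → ℝ)
    (h : fpl M x = q) :
    isLCPsol M q (fun i => max (-x i) 0) := by
  subst h
  have key : ∀ i, (M.mulVec (fun i => max (-x i) 0) + fpl M x) i = max (x i) 0 := by
    intro i; simp [fpl, Pi.add_apply]
  refine ⟨fun i => le_max_right _ _, fun i => (key i) ▸ le_max_right _ _, fun i => ?_⟩
  rw [key i]
  rcases le_total (x i) 0 with hle | hle
  · simp [max_eq_right hle]
  · simp [max_eq_right (neg_nonpos.mpr hle)]
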